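/- Under the same hypotheses as in the involutivity theorem (H a finite-dimensional Hopf algebra over a field k with antipode S, inverse antipode S', right integral λ on the dual with λ_l := λ∘S satisfying λ_l(x*y) = λ_l(y*S(S(x))), and R, R' mutually inverse quasitriangular elements of H⊗H with (S⊗id)(R) = R'), for every element a of the center of H the Fourier transform F(a) = (φ(a) ⊗ id)(R₂₁ * R₁₂), with φ(a)(b) = λ(S(a)*b), satisfies the identity F(a) = (id ⊗ λ_l)( R' * flip(R') * (1 ⊗ a) ), where flip(R') is the tensor swap of R' (so that flip(R') is the inverse of R₂₁) and (id ⊗ μ)(x⊗y) = μ(y)•x. -/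

import Mathlib

open scoped TensorProduct
open Coalgebra TensorProduct

section Anti
variable {k : Type*} [CommSemiring k] {H : Type*} [Semiring H] [HopfAlgebra k H]

lemma repr_counit_right {ι : Type*} (x : H) (r : Coalgebra.Repr k x ι) :
    ∑ i ∈ r.index, Coalgebra.counit (R := k) (r.right i) • r.left i = x := by
  have h := Coalgebra.sum_tmul_counit_eq (R := k) r
  have := congrArg (TensorProduct.rid k H) h
  simp only [map_sum, TensorProduct.rid_tmul, one_smul] at this
  exact this

lemma repr_counit_left {ι : Type*} (x : H) (r : Coalgebra.Repr k x ι) :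
    ∑ i ∈ r.index, Coalgebra.counit (R := k) (r.left i) • r.right i = x := by
  have h := Coalgebra.sum_counit_tmul_eq (R := k) r
  have := congrArg (TensorProduct.lid k H) h
  simp only [map_sum, TensorProduct.lid_tmul, one_smul] at this
  exact this

lemma repr_prod_antipode_mul {ι κ : Type*} (x y : H) (rx : Coalgebra.Repr k x ι) (ry : Coalgebra.Repr k y κ) :
    ∑ l ∈ rx.index, ∑ m ∈ ry.index,
      HopfAlgebra.antipode (R := k) (rx.left l * ry.left m) * (rx.right l * ry.right m)
      = Coalgebra.counit (R := k) (x * y) • (1 : H) := by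
  let r : Coalgebra.Repr k (x * y) (ι × κ) :=
    { index := rx.index ×ˢ ry.index
      left := fun p => rx.left p.1 * ry.left p.2
      right := fun p => rx.right p.1 * ry.right p.2
      eq := by
        rw [Bialgebra.comul_mul, ← rx.eq, ← ry.eq, Finset.sum_mul_sum]
        rw [Finset.sum_product]
        simp [Algebra.TensorProduct.tmul_mul_tmul] }
  have := HopfAlgebra.sum_antipode_mul_eq_smul r
  simpa [r, Finset.sum_product] using this

end Anti

section Theta
variable (k : Type*) [CommSemiring k] (H : Type*) [Semiring H] [HopfAlgebra k H]

/-- Auxiliary 6-linear gadget for the antipode anti-multiplicativity proof. -/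
noncomputable def theta : (H ⊗[k] (H ⊗[k] H)) ⊗[k] (H ⊗[k] (H ⊗[k] H)) →ₗ[k] H :=
  (LinearMap.mul' k H) ∘ₗ
    (TensorProduct.map
      ((HopfAlgebra.antipode (R := k)) ∘ₗ LinearMap.mul' k H)
      ((LinearMap.mul' k H) ∘ₗ (TensorProduct.map (LinearMap.mul' k H)
          ((LinearMap.mul' k H) ∘ₗ
            (TensorProduct.map (HopfAlgebra.antipode (R := k)) (HopfAlgebra.antipode (R := k))) ∘ₗ
            (TensorProduct.comm k H H).toLinearMap)) ∘ₗ
        (TensorProduct.tensorTensorTensorComm k H H H H).toLinearMap)) ∘ₗ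
    (TensorProduct.tensorTensorTensorComm k H (H ⊗[k] H) H (H ⊗[k] H)).toLinearMap

variable {k H}

lemma theta_tmul (α β γ α' β' γ' : H) :
    theta k H ((α ⊗ₜ (β ⊗ₜ γ)) ⊗ₜ (α' ⊗ₜ (β' ⊗ₜ γ'))) =
      HopfAlgebra.antipode (R := k) (α * α') *
        ((β * β') * (HopfAlgebra.antipode (R := k) γ' * HopfAlgebra.antipode (R := k) γ)) := by
  simp [theta, TensorProduct.tensorTensorTensorComm_tmul, LinearMap.mul'_apply]

end Theta

section Main
variable {k : Type*} [CommSemiring k] {H : Type*} [Semiring H] [HopfAlgebra k H]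

lemma helperA {ι : Type*} (C₁ C₂ D : H) (s : Finset ι) (f g : ι → H) (c : k)
    (h : ∑ m ∈ s, f m * g m = c • 1) :
    ∑ m ∈ s, C₁ * (C₂ * (f m * (g m * D))) = c • (C₁ * (C₂ * D)) := by
  have h' : ∀ m, f m * (g m * D) = (f m * g m) * D := fun m => (mul_assoc _ _ _).symm
  calc ∑ m ∈ s, C₁ * (C₂ * (f m * (g m * D)))
      = C₁ * (C₂ * ((∑ m ∈ s, f m * g m) * D)) := by
        simp only [h', ← Finset.sum_mul, ← Finset.mul_sum]
    _ = c • (C₁ * (C₂ * D)) := by rw [h, smul_mul_assoc, one_mul, mul_smul_comm, mul_smul_comm]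

lemma helperB {ι : Type*} (C : H) (s : Finset ι) (f g : ι → H) (c : k)
    (h : ∑ m ∈ s, f m * g m = c • 1) :
    ∑ m ∈ s, C * (f m * g m) = c • C := by
  rw [← Finset.mul_sum, h, mul_smul_comm, mul_one]

theorem antipode_mul_anti (a b : H) :
    HopfAlgebra.antipode (R := k) (a * b)
      = HopfAlgebra.antipode (R := k) b * HopfAlgebra.antipode (R := k) a := by
  classical
  let ra := Coalgebra.Repr.arbitrary k a
  let rb := Coalgebra.Repr.arbitrary k b
  let ra1 : ∀ i : ra.ι, Coalgebra.Repr k (ra.left i) (H × H) := fun i => Coalgebra.Repr.arbitrary k _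
  let ra2 : ∀ i : ra.ι, Coalgebra.Repr k (ra.right i) (H × H) := fun i => Coalgebra.Repr.arbitrary k _
  let rb1 : ∀ j : rb.ι, Coalgebra.Repr k (rb.left j) (H × H) := fun j => Coalgebra.Repr.arbitrary k _
  let rb2 : ∀ j : rb.ι, Coalgebra.Repr k (rb.right j) (H × H) := fun j => Coalgebra.Repr.arbitrary k _
  have keyA := Coalgebra.sum_tmul_tmul_eq ra ra1 ra2
  have keyB := Coalgebra.sum_tmul_tmul_eq rb rb1 rb2
  have main :
      theta k H ((∑ i ∈ ra.index, ∑ l ∈ (ra2 i).index,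
          ra.left i ⊗ₜ[k] ((ra2 i).left l ⊗ₜ[k] (ra2 i).right l)) ⊗ₜ[k]
        (∑ j ∈ rb.index, ∑ m ∈ (rb2 j).index,
          rb.left j ⊗ₜ[k] ((rb2 j).left m ⊗ₜ[k] (rb2 j).right m)))
      = theta k H ((∑ i ∈ ra.index, ∑ l ∈ (ra1 i).index,
          (ra1 i).left l ⊗ₜ[k] ((ra1 i).right l ⊗ₜ[k] ra.right i)) ⊗ₜ[k]
        (∑ j ∈ rb.index, ∑ m ∈ (rb1 j).index,
          (rb1 j).left m ⊗ₜ[k] ((rb1 j).right m ⊗ₜ[k] rb.right j))) := by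
    rw [← keyA, ← keyB]
  have way1 :
      theta k H ((∑ i ∈ ra.index, ∑ l ∈ (ra2 i).index,
          ra.left i ⊗ₜ[k] ((ra2 i).left l ⊗ₜ[k] (ra2 i).right l)) ⊗ₜ[k]
        (∑ j ∈ rb.index, ∑ m ∈ (rb2 j).index,
          rb.left j ⊗ₜ[k] ((rb2 j).left m ⊗ₜ[k] (rb2 j).right m)))
      = HopfAlgebra.antipode (R := k) (a * b) := by
    calc theta k H _
        = ∑ j ∈ rb.index, ∑ m ∈ (rb2 j).index, ∑ i ∈ ra.index, ∑ l ∈ (ra2 i).index,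
            HopfAlgebra.antipode (R := k) (ra.left i * rb.left j) *
              (((ra2 i).left l * (rb2 j).left m) *
                (HopfAlgebra.antipode (R := k) ((rb2 j).right m) *
                  HopfAlgebra.antipode (R := k) ((ra2 i).right l))) := by
          simp only [TensorProduct.sum_tmul, TensorProduct.tmul_sum, map_sum, theta_tmul,
            mul_assoc]
      _ = ∑ j ∈ rb.index, ∑ i ∈ ra.index, ∑ l ∈ (ra2 i).index, ∑ m ∈ (rb2 j).index,
            HopfAlgebra.antipode (R := k) (ra.left i * rb.left j) *
              (((ra2 i).left l * (rb2 j).left m) *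
                (HopfAlgebra.antipode (R := k) ((rb2 j).right m) *
                  HopfAlgebra.antipode (R := k) ((ra2 i).right l))) := by
          refine Finset.sum_congr rfl fun j _ => ?_
          rw [Finset.sum_comm]
          exact Finset.sum_congr rfl fun i _ => Finset.sum_comm
      _ = ∑ j ∈ rb.index, ∑ i ∈ ra.index,
            Coalgebra.counit (R := k) (rb.right j) •
              Coalgebra.counit (R := k) (ra.right i) •
                HopfAlgebra.antipode (R := k) (ra.left i * rb.left j) := by
          refine Finset.sum_congr rfl fun j _ => Finset.sum_congr rfl fun i _ => ?_
          calc ∑ l ∈ (ra2 i).index, ∑ m ∈ (rb2 j).index,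
                HopfAlgebra.antipode (R := k) (ra.left i * rb.left j) *
                  (((ra2 i).left l * (rb2 j).left m) *
                    (HopfAlgebra.antipode (R := k) ((rb2 j).right m) *
                      HopfAlgebra.antipode (R := k) ((ra2 i).right l)))
              = ∑ l ∈ (ra2 i).index,
                  Coalgebra.counit (R := k) (rb.right j) •
                    (HopfAlgebra.antipode (R := k) (ra.left i * rb.left j) *
                      ((ra2 i).left l * HopfAlgebra.antipode (R := k) ((ra2 i).right l))) := by
                refine Finset.sum_congr rfl fun l _ => ?_
                have := helperA (HopfAlgebra.antipode (R := k) (ra.left i * rb.left j))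
                  ((ra2 i).left l) (HopfAlgebra.antipode (R := k) ((ra2 i).right l))
                  (rb2 j).index ((rb2 j).left)
                  (fun m => HopfAlgebra.antipode (R := k) ((rb2 j).right m))
                  (Coalgebra.counit (R := k) (rb.right j))
                  (HopfAlgebra.sum_mul_antipode_eq_smul (rb2 j))
                rw [← this]
                refine Finset.sum_congr rfl fun m _ => ?_
                simp only [mul_assoc]
            _ = Coalgebra.counit (R := k) (rb.right j) •
                  Coalgebra.counit (R := k) (ra.right i) •
                    HopfAlgebra.antipode (R := k) (ra.left i * rb.left j) := by
                rw [← Finset.smul_sum,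
                  helperB (HopfAlgebra.antipode (R := k) (ra.left i * rb.left j))
                    (ra2 i).index ((ra2 i).left)
                    (fun l => HopfAlgebra.antipode (R := k) ((ra2 i).right l))
                    (Coalgebra.counit (R := k) (ra.right i))
                    (HopfAlgebra.sum_mul_antipode_eq_smul (ra2 i))]
      _ = HopfAlgebra.antipode (R := k) (a * b) := by
          conv_rhs => rw [← repr_counit_right a ra, ← repr_counit_right b rb]
          rw [Finset.sum_mul_sum, Finset.sum_comm]
          simp only [map_sum, smul_mul_assoc, mul_smul_comm, map_smul]
  have way2 :
      theta k H ((∑ i ∈ ra.index, ∑ l ∈ (ra1 i).index,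
          (ra1 i).left l ⊗ₜ[k] ((ra1 i).right l ⊗ₜ[k] ra.right i)) ⊗ₜ[k]
        (∑ j ∈ rb.index, ∑ m ∈ (rb1 j).index,
          (rb1 j).left m ⊗ₜ[k] ((rb1 j).right m ⊗ₜ[k] rb.right j)))
      = HopfAlgebra.antipode (R := k) b * HopfAlgebra.antipode (R := k) a := by
    calc theta k H _
        = ∑ j ∈ rb.index, ∑ m ∈ (rb1 j).index, ∑ i ∈ ra.index, ∑ l ∈ (ra1 i).index,
            HopfAlgebra.antipode (R := k) ((ra1 i).left l * (rb1 j).left m) *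
              (((ra1 i).right l * (rb1 j).right m) *
                (HopfAlgebra.antipode (R := k) (rb.right j) *
                  HopfAlgebra.antipode (R := k) (ra.right i))) := by
          simp only [TensorProduct.sum_tmul, TensorProduct.tmul_sum, map_sum, theta_tmul,
            mul_assoc]
      _ = ∑ j ∈ rb.index, ∑ i ∈ ra.index, ∑ l ∈ (ra1 i).index, ∑ m ∈ (rb1 j).index,
            HopfAlgebra.antipode (R := k) ((ra1 i).left l * (rb1 j).left m) *
              (((ra1 i).right l * (rb1 j).right m) *
                (HopfAlgebra.antipode (R := k) (rb.right j) *
                  HopfAlgebra.antipode (R := k) (ra.right i))) := by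
          refine Finset.sum_congr rfl fun j _ => ?_
          rw [Finset.sum_comm]
          exact Finset.sum_congr rfl fun i _ => Finset.sum_comm
      _ = ∑ j ∈ rb.index, ∑ i ∈ ra.index,
            (Coalgebra.counit (R := k) (ra.left i * rb.left j)) •
              (HopfAlgebra.antipode (R := k) (rb.right j) *
                HopfAlgebra.antipode (R := k) (ra.right i)) := by
          refine Finset.sum_congr rfl fun j _ => Finset.sum_congr rfl fun i _ => ?_
          calc ∑ l ∈ (ra1 i).index, ∑ m ∈ (rb1 j).index,
                HopfAlgebra.antipode (R := k) ((ra1 i).left l * (rb1 j).left m) *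
                  (((ra1 i).right l * (rb1 j).right m) *
                    (HopfAlgebra.antipode (R := k) (rb.right j) *
                      HopfAlgebra.antipode (R := k) (ra.right i)))
              = (∑ l ∈ (ra1 i).index, ∑ m ∈ (rb1 j).index,
                  HopfAlgebra.antipode (R := k) ((ra1 i).left l * (rb1 j).left m) *
                    ((ra1 i).right l * (rb1 j).right m)) *
                  (HopfAlgebra.antipode (R := k) (rb.right j) *
                    HopfAlgebra.antipode (R := k) (ra.right i)) := by
                rw [Finset.sum_mul]
                exact Finset.sum_congr rfl fun l _ => by
                  rw [Finset.sum_mul]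
                  exact Finset.sum_congr rfl fun m _ => (mul_assoc _ _ _).symm
            _ = (Coalgebra.counit (R := k) (ra.left i * rb.left j)) •
                  (HopfAlgebra.antipode (R := k) (rb.right j) *
                    HopfAlgebra.antipode (R := k) (ra.right i)) := by
                rw [repr_prod_antipode_mul _ _ (ra1 i) (rb1 j), smul_mul_assoc, one_mul]
      _ = HopfAlgebra.antipode (R := k) b * HopfAlgebra.antipode (R := k) a := by
          conv_rhs => rw [← repr_counit_left b rb, ← repr_counit_left a ra]
          simp only [Bialgebra.counit_mul, map_sum, map_smul, Finset.sum_mul, Finset.mul_sum,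
            smul_mul_assoc, mul_smul_comm, mul_smul]
          rw [Finset.sum_comm]
          exact Finset.sum_congr rfl fun i _ => by rw [Finset.smul_sum]
  rw [way1, way2] at main
  exact main

end Main

section Defs

variable (k : Type*) [Field k] (H : Type*) [Ring H] [HopfAlgebra k H]

/-- `(p ⊗ id) : H ⊗ H → H`, `x ⊗ y ↦ p(x) • y`. -/
noncomputable def lapply (p : Module.Dual k H) : H ⊗[k] H →ₗ[k] H :=
  (TensorProduct.lid k H).toLinearMap ∘ₗ TensorProduct.map p LinearMap.id

/-- `(id ⊗ μ) : H ⊗ H → H`, `x ⊗ y ↦ μ(y) • x`. -/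
noncomputable def rapply (μ : Module.Dual k H) : H ⊗[k] H →ₗ[k] H :=
  (TensorProduct.rid k H).toLinearMap ∘ₗ TensorProduct.map LinearMap.id μ

/-- The embedding `x ⊗ y ↦ x ⊗ y ⊗ 1` of `H ⊗ H` into `H ⊗ H ⊗ H`. -/
noncomputable def leg12 : H ⊗[k] H →ₐ[k] H ⊗[k] (H ⊗[k] H) :=
  Algebra.TensorProduct.map (AlgHom.id k H) Algebra.TensorProduct.includeLeft

/-- The embedding `x ⊗ y ↦ x ⊗ 1 ⊗ y`. -/
noncomputable def leg13 : H ⊗[k] H →ₐ[k] H ⊗[k] (H ⊗[k] H) :=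
  Algebra.TensorProduct.map (AlgHom.id k H) Algebra.TensorProduct.includeRight

/-- The embedding `x ⊗ y ↦ 1 ⊗ x ⊗ y`. -/
noncomputable def leg23 : H ⊗[k] H →ₐ[k] H ⊗[k] (H ⊗[k] H) :=
  Algebra.TensorProduct.includeRight

/-- `R` is quasitriangular: `R Δ(x) = Δᵒᵖ(x) R`, `(Δ ⊗ id)(R) = R₁₃ R₂₃`, and
`(id ⊗ Δ)(R) = R₁₃ R₁₂`. -/
def IsQuasitriangular (Rm : H ⊗[k] H) : Prop :=
  (∀ x : H, Rm * Coalgebra.comul (R := k) x =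
      (TensorProduct.comm k H H) (Coalgebra.comul (R := k) x) * Rm) ∧
  ((TensorProduct.assoc k H H H).toLinearMap
      ((Coalgebra.comul (R := k)).rTensor H Rm) = leg13 k H Rm * leg23 k H Rm) ∧
  ((Coalgebra.comul (R := k) (A := H)).lTensor H Rm = leg13 k H Rm * leg12 k H Rm)

end Defs

/-- **Theorem `fourier`, proof identity**: on the center, the quantum Fourier
transform `F = 𝔍 ∘ φ` coincides with the Lyubashenko–Majid map
`𝔖₋(a) = (id ⊗ λ_l)(R₁₂⁻¹ R₂₁⁻¹ (1 ⊗ a))`, where `λ_l = λ ∘ S` and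
`R₁₂⁻¹ = R'`, `R₂₁⁻¹ = flip R'`. -/
theorem fourier_eq_lyubashenko_majid (k : Type*) [Field k] (H : Type*) [Ring H]
    [HopfAlgebra k H] [FiniteDimensional k H]
    (S' : H →ₗ[k] H)
    (hS'S : ∀ a : H, S' (HopfAlgebra.antipode (R := k) a) = a)
    (hSS' : ∀ a : H, HopfAlgebra.antipode (R := k) (S' a) = a)
    (lam : Module.Dual k H)
    (hint : ∀ a : H, rapply k H lam (Coalgebra.comul (R := k) a) = lam a • 1)
    (hlaml : ∀ x y : H, lam (HopfAlgebra.antipode (R := k) (x * y)) =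
      lam (HopfAlgebra.antipode (R := k)
        (y * HopfAlgebra.antipode (R := k) (HopfAlgebra.antipode (R := k) x))))
    (Rm R' : H ⊗[k] H) (hRR' : Rm * R' = 1) (hR'R : R' * Rm = 1)
    (hQT : IsQuasitriangular k H Rm)
    (hSR : TensorProduct.map (HopfAlgebra.antipode (R := k)) LinearMap.id Rm = R')
    (hS'R : TensorProduct.map LinearMap.id S' Rm = R')
    (F : H → H)
    (hF : ∀ a : H, F a =
      lapply k H (lam ∘ₗ LinearMap.mulLeft k (HopfAlgebra.antipode (R := k) a))
        ((TensorProduct.comm k H H) Rm * Rm)) :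
    ∀ a ∈ Subalgebra.center k H,
      F a = rapply k H (lam ∘ₗ HopfAlgebra.antipode (R := k))
        (R' * (TensorProduct.comm k H H) R' * ((1 : H) ⊗ₜ[k] a)) := by
  intro a ha
  have hc : ∀ g : H, g * a = a * g := Subalgebra.mem_center_iff.mp ha
  have hS'anti : ∀ x y : H, S' (x * y) = S' y * S' x := by
    intro x y
    conv_lhs => rw [← hSS' x, ← hSS' y, ← antipode_mul_anti, hS'S]
  have hscal : ∀ y u : H,
      lam (HopfAlgebra.antipode (R := k) a * (y * u)) =
        lam (HopfAlgebra.antipode (R := k)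
          (S' y * HopfAlgebra.antipode (R := k) u * a)) := by
    intro y u
    have h1 : S' (HopfAlgebra.antipode (R := k) a * (y * u)) = S' u * (S' y * a) := by
      rw [hS'anti, hS'S, hS'anti, mul_assoc]
    calc lam (HopfAlgebra.antipode (R := k) a * (y * u))
        = lam (HopfAlgebra.antipode (R := k)
            (S' (HopfAlgebra.antipode (R := k) a * (y * u)))) := by rw [hSS']
      _ = lam (HopfAlgebra.antipode (R := k) (S' u * (S' y * a))) := by rw [h1]
      _ = lam (HopfAlgebra.antipode (R := k) ((S' y * a) *
            HopfAlgebra.antipode (R := k) (HopfAlgebra.antipode (R := k) (S' u)))) :=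
          hlaml (S' u) (S' y * a)
      _ = lam (HopfAlgebra.antipode (R := k) ((S' y * a) * HopfAlgebra.antipode (R := k) u)) := by
          rw [hSS' u]
      _ = lam (HopfAlgebra.antipode (R := k) (S' y * (HopfAlgebra.antipode (R := k) u * a))) := by
          rw [mul_assoc, hc]
      _ = lam (HopfAlgebra.antipode (R := k)
            (S' y * HopfAlgebra.antipode (R := k) u * a)) := by rw [mul_assoc]
  let L1 : (H ⊗[k] H) ⊗[k] (H ⊗[k] H) →ₗ[k] H :=
    (lapply k H (lam ∘ₗ LinearMap.mulLeft k (HopfAlgebra.antipode (R := k) a))) ∘ₗ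
      (LinearMap.mul' k (H ⊗[k] H)) ∘ₗ
      (TensorProduct.map (TensorProduct.comm k H H).toLinearMap LinearMap.id)
  let L2 : (H ⊗[k] H) ⊗[k] (H ⊗[k] H) →ₗ[k] H :=
    (rapply k H (lam ∘ₗ HopfAlgebra.antipode (R := k))) ∘ₗ
      (LinearMap.mulRight k ((1 : H) ⊗ₜ[k] a)) ∘ₗ
      (LinearMap.mul' k (H ⊗[k] H)) ∘ₗ
      (TensorProduct.map LinearMap.id (TensorProduct.comm k H H).toLinearMap)
  have hL1 : F a = L1 (Rm ⊗ₜ[k] Rm) := by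
    rw [hF]
    simp [L1, LinearMap.mul'_apply]
  have hL2 : rapply k H (lam ∘ₗ HopfAlgebra.antipode (R := k))
      (R' * (TensorProduct.comm k H H) R' * ((1 : H) ⊗ₜ[k] a)) = L2 (R' ⊗ₜ[k] R') := by
    simp [L2, LinearMap.mul'_apply]
  have hmaps : L1 = L2 ∘ₗ TensorProduct.map
      (TensorProduct.map LinearMap.id S')
      (TensorProduct.map (HopfAlgebra.antipode (R := k)) LinearMap.id) := by
    ext x y u v
    simp [L1, L2, lapply, rapply, LinearMap.mul'_apply,
      Algebra.TensorProduct.tmul_mul_tmul]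
    rw [hscal]
  calc F a = L1 (Rm ⊗ₜ[k] Rm) := hL1
    _ = L2 ((TensorProduct.map LinearMap.id S' Rm) ⊗ₜ[k]
          (TensorProduct.map (HopfAlgebra.antipode (R := k)) LinearMap.id Rm)) := by
        rw [hmaps]
        simp
    _ = L2 (R' ⊗ₜ[k] R') := by rw [hSR, hS'R]
    _ = rapply k H (lam ∘ₗ HopfAlgebra.antipode (R := k))
          (R' * (TensorProduct.comm k H H) R' * ((1 : H) ⊗ₜ[k] a)) := hL2.symm
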